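/- Let {I_u, J_u}_{u∈V} be a nest representation of a finite digraph D = (V,E) in which every interval has positive length, let p_v ∈ J_v be pairwise distinct points, and order V by u ≤ v iff p_u ≤ p_v. Then for all vertices u ≤ v ≤ w ≤ z, if uw ∈ E and vz ∈ E, then vw ∈ E or uz ∈ E. -/
import Mathlib


/-- A nest representation of a digraph `E`: closed bounded (nonempty) real intervals
`I_u = [aI u, bI u]` and `J_u = [aJ u, bJ u]` with `J_u ⊆ I_u` for every vertex `u`,
such that `u → v` is an arc iff `I_u ∩ J_v ≠ ∅`. -/
def IsNestRepresentation {V : Type*} (E : V → V → Prop)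
    (aI bI aJ bJ : V → ℝ) : Prop :=
  (∀ u, aI u ≤ bI u) ∧ (∀ u, aJ u ≤ bJ u) ∧
  (∀ u, Set.Icc (aJ u) (bJ u) ⊆ Set.Icc (aI u) (bI u)) ∧
  (∀ u v, E u v ↔ (Set.Icc (aI u) (bI u) ∩ Set.Icc (aJ v) (bJ v)).Nonempty)

/-- An interval nest digraph is one admitting a nest representation. -/
def IsIntervalNestDigraph {V : Type*} (E : V → V → Prop) : Prop :=
  ∃ aI bI aJ bJ : V → ℝ, IsNestRepresentation E aI bI aJ bJ

/-- The arc `uv` is symmetric: both `uv` and `vu` are arcs. -/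
def SymArc {V : Type*} (E : V → V → Prop) (u v : V) : Prop := E u v ∧ E v u

/-- A nest ordering of a digraph `E`: a linear order `le` on the vertices such that
for all `u ≤ v ≤ w ≤ z` (repetitions allowed) properties (i), (ii), (iii) hold. -/
def IsNestOrdering {V : Type*} (E : V → V → Prop) (le : V → V → Prop) : Prop :=
  IsLinearOrder V le ∧
  ∀ u v w z : V, le u v → le v w → le w z →
    ((E u w ∧ E u z → E u v ∨ (SymArc E v w ∧ SymArc E v z ∧ SymArc E w z)) ∧
     (E z u ∧ E z v → E z w ∨ (SymArc E w u ∧ SymArc E v u ∧ SymArc E w v)) ∧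
     (E u z ∧ E v w → E u w ∨ E v z) ∧
     (E z u ∧ E w v → E z v ∨ E w u) ∧
     (E u w ∧ E v z → E v w ∨ E u z) ∧
     (E z v ∧ E w u → E z u ∨ E w v))

/-- In a nest representation with positive-length intervals, ordering vertices by
chosen pairwise distinct points `p v ∈ J_v`: if `u ≤ v ≤ w ≤ z`, `uw ∈ E` and
`vz ∈ E`, then `vw ∈ E` or `uz ∈ E`. -/
theorem nest_point_order_property_iii
    {V : Type*} [Fintype V] (E : V → V → Prop)
    (aI bI aJ bJ : V → ℝ)
    (hrep : IsNestRepresentation E aI bI aJ bJ)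
    (hposI : ∀ u, aI u < bI u) (hposJ : ∀ u, aJ u < bJ u)
    (p : V → ℝ) (hp : ∀ v, p v ∈ Set.Icc (aJ v) (bJ v))
    (hinj : Function.Injective p) :
    ∀ u v w z : V, p u ≤ p v → p v ≤ p w → p w ≤ p z →
      E u w → E v z → E v w ∨ E u z := by
  obtain ⟨hI, hJ, hsub, hE⟩ := hrep
  intro u v w z huv hvw hwz huw hvz
  obtain ⟨x, ⟨hx1, hx2⟩, hx3, hx4⟩ := (hE u w).1 huw
  obtain ⟨y, ⟨hy1, hy2⟩, hy3, hy4⟩ := (hE v z).1 hvz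
  have hpI : ∀ t, aI t ≤ p t ∧ p t ≤ bI t := fun t => hsub t (hp t)
  by_cases h : aJ w ≤ bI v
  · left
    rw [hE]
    refine ⟨max (aI v) (aJ w), ⟨le_max_left _ _, max_le (hI v) h⟩,
      le_max_right _ _, max_le ?_ (hJ w)⟩
    exact le_trans (hpI v).1 (le_trans hvw (hp w).2)
  · right
    rw [hE]
    push_neg at h
    refine ⟨max (aI u) (aJ z), ⟨le_max_left _ _, max_le (hI u) ?_⟩,
      le_max_right _ _, max_le ?_ (hJ z)⟩
    · exact le_trans hy3 (le_trans hy2 (le_trans h.le (le_trans hx3 hx2)))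
    · exact le_trans (hpI u).1 (le_trans (le_trans huv (le_trans hvw hwz)) (hp z).2)
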